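/- Let R, S be rings and M an (R,S)-bimodule which is an equivalence bimodule. Then the ring homomorphism from R to the endomorphism ring of M as a right S-module, sending r to the map m ↦ r•m, is bijective. -/

import Mathlib

open scoped TensorProduct
open MulOpposite

namespace Paper

noncomputable section

/-- The subgroup of relators defining the balanced tensor product `M ⊗[S] N`
of a right `S`-module `M` and a left `S`-module `N`. -/
def balRel (S : Type*) [Ring S] (M : Type*) [AddCommGroup M] [Module Sᵐᵒᵖ M]
    (N : Type*) [AddCommGroup N] [Module S N] : AddSubgroup (M ⊗[ℤ] N) :=
  AddSubgroup.closure
    {x | ∃ (m : M) (s : S) (n : N), x = (op s • m) ⊗ₜ[ℤ] n - m ⊗ₜ[ℤ] (s • n)}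

/-- The balanced tensor product `M ⊗[S] N` of a right `S`-module `M` and a
left `S`-module `N`: the quotient of the tensor product `M ⊗[ℤ] N` of abelian
groups by the relations `(m • s) ⊗ n = m ⊗ (s • n)`. -/
def BalTensor (S : Type*) [Ring S] (M : Type*) [AddCommGroup M] [Module Sᵐᵒᵖ M]
    (N : Type*) [AddCommGroup N] [Module S N] : Type _ :=
  (M ⊗[ℤ] N) ⧸ balRel S M N

instance (S : Type*) [Ring S] (M : Type*) [AddCommGroup M] [Module Sᵐᵒᵖ M]
    (N : Type*) [AddCommGroup N] [Module S N] : AddCommGroup (BalTensor S M N) :=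
  QuotientAddGroup.Quotient.addCommGroup _

/-- The elementary tensor `m ⊗ n` in the balanced tensor product `M ⊗[S] N`. -/
def BalTensor.tmul (S : Type*) [Ring S] (M : Type*) [AddCommGroup M] [Module Sᵐᵒᵖ M]
    (N : Type*) [AddCommGroup N] [Module S N] (m : M) (n : N) : BalTensor S M N :=
  QuotientAddGroup.mk (m ⊗ₜ[ℤ] n)


/-- The canonical projection onto the balanced tensor product. -/
def BalTensor.mk (S : Type*) [Ring S] (M : Type*) [AddCommGroup M] [Module Sᵐᵒᵖ M]
    (N : Type*) [AddCommGroup N] [Module S N] (x : M ⊗[ℤ] N) : BalTensor S M N :=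
  QuotientAddGroup.mk x

/-- The left action of `r : R` on `M ⊗[ℤ] N` through the first factor. -/
def lsmulAux (R : Type*) [Ring R] (M : Type*) [AddCommGroup M] [Module R M]
    (N : Type*) [AddCommGroup N] (r : R) : M ⊗[ℤ] N →+ M ⊗[ℤ] N :=
  (LinearMap.rTensor N ((DistribMulAction.toAddMonoidHom M r).toIntLinearMap)).toAddMonoidHom

/-- The right action of `t : Tᵐᵒᵖ` on `M ⊗[ℤ] N` through the second factor. -/
def rsmulAux (T : Type*) [Ring T] (M : Type*) [AddCommGroup M]
    (N : Type*) [AddCommGroup N] [Module Tᵐᵒᵖ N] (t : Tᵐᵒᵖ) : M ⊗[ℤ] N →+ M ⊗[ℤ] N :=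
  (LinearMap.lTensor M ((DistribMulAction.toAddMonoidHom N t).toIntLinearMap)).toAddMonoidHom

section LeftAction

variable (R S : Type*) [Ring R] [Ring S]
  (M : Type*) [AddCommGroup M] [Module R M] [Module Sᵐᵒᵖ M] [SMulCommClass R Sᵐᵒᵖ M]
  (N : Type*) [AddCommGroup N] [Module S N]

theorem lsmulAux_le (r : R) :
    balRel S M N ≤ (balRel S M N).comap (lsmulAux R M N r) := by
  rw [balRel, AddSubgroup.closure_le]
  rintro x ⟨m, s, n, rfl⟩
  simp only [SetLike.mem_coe, AddSubgroup.mem_comap, map_sub]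
  have h1 : lsmulAux R M N r ((op s • m) ⊗ₜ[ℤ] n) = (op s • (r • m)) ⊗ₜ[ℤ] n := by
    simp [lsmulAux, LinearMap.rTensor_tmul, smul_comm]
  have h2 : lsmulAux R M N r (m ⊗ₜ[ℤ] (s • n)) = (r • m) ⊗ₜ[ℤ] (s • n) := by
    simp [lsmulAux, LinearMap.rTensor_tmul]
  rw [h1, h2]
  exact AddSubgroup.subset_closure ⟨r • m, s, n, rfl⟩

instance : SMul R (BalTensor S M N) :=
  ⟨fun r => QuotientAddGroup.map _ _ (lsmulAux R M N r) (lsmulAux_le R S M N r)⟩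

theorem BalTensor.lsmul_mk (r : R) (x : M ⊗[ℤ] N) :
    r • (BalTensor.mk S M N x) = BalTensor.mk S M N (lsmulAux R M N r x) := rfl

instance : Module R (BalTensor S M N) where
  smul r x := r • x
  one_smul x := by
    induction x using QuotientAddGroup.induction_on with
    | H y =>
      show QuotientAddGroup.mk (lsmulAux R M N 1 y) = _
      congr 1
      induction y using TensorProduct.induction_on with
      | zero => simp
      | tmul m n => simp [lsmulAux]
      | add a b ha hb => simp only [map_add, ha, hb]
  mul_smul a b x := by
    induction x using QuotientAddGroup.induction_on with
    | H y =>
      show QuotientAddGroup.mk (lsmulAux R M N (a * b) y) =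
        QuotientAddGroup.mk (lsmulAux R M N a (lsmulAux R M N b y))
      congr 1
      induction y using TensorProduct.induction_on with
      | zero => simp
      | tmul m n => simp [lsmulAux, mul_smul]
      | add a' b' ha hb => simp only [map_add, ha, hb]
  smul_zero r := map_zero (QuotientAddGroup.map _ _ (lsmulAux R M N r) (lsmulAux_le R S M N r))
  smul_add r x y := map_add (QuotientAddGroup.map _ _ (lsmulAux R M N r) (lsmulAux_le R S M N r)) x y
  add_smul a b x := by
    induction x using QuotientAddGroup.induction_on with
    | H y =>
      show QuotientAddGroup.mk (lsmulAux R M N (a + b) y) =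
        QuotientAddGroup.mk (lsmulAux R M N a y) + QuotientAddGroup.mk (lsmulAux R M N b y)
      refine (congrArg (fun z : M ⊗[ℤ] N => (QuotientAddGroup.mk z : M ⊗[ℤ] N ⧸ balRel S M N)) ?_).trans
        (QuotientAddGroup.mk_add ..)
      induction y using TensorProduct.induction_on with
      | zero => simp
      | tmul m n => simp [lsmulAux, add_smul, TensorProduct.add_tmul]
      | add a' b' ha hb =>
        simp only [map_add, ha, hb]
        abel
  zero_smul x := by
    induction x using QuotientAddGroup.induction_on with
    | H y =>
      show QuotientAddGroup.mk (lsmulAux R M N (0 : R) y) = 0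
      have : lsmulAux R M N (0 : R) y = 0 := by
        induction y using TensorProduct.induction_on with
        | zero => simp
        | tmul m n => simp [lsmulAux]
        | add a' b' ha hb => simp only [map_add, ha, hb]; abel
      rw [this]
      rfl

theorem BalTensor.smul_tmul (r : R) (m : M) (n : N) :
    r • (BalTensor.tmul S M N m n) = BalTensor.tmul S M N (r • m) n := by
  show QuotientAddGroup.mk (lsmulAux R M N r (m ⊗ₜ[ℤ] n)) = _
  rw [BalTensor.tmul]
  congr 1

end LeftAction

section RightAction

variable (S T : Type*) [Ring S] [Ring T]
  (M : Type*) [AddCommGroup M] [Module Sᵐᵒᵖ M]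
  (N : Type*) [AddCommGroup N] [Module S N] [Module Tᵐᵒᵖ N] [SMulCommClass S Tᵐᵒᵖ N]

theorem rsmulAux_le (t : Tᵐᵒᵖ) :
    balRel S M N ≤ (balRel S M N).comap (rsmulAux T M N t) := by
  rw [balRel, AddSubgroup.closure_le]
  rintro x ⟨m, s, n, rfl⟩
  simp only [SetLike.mem_coe, AddSubgroup.mem_comap, map_sub]
  have h1 : rsmulAux T M N t ((op s • m) ⊗ₜ[ℤ] n) = (op s • m) ⊗ₜ[ℤ] (t • n) := by
    simp [rsmulAux, LinearMap.lTensor_tmul]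
  have h2 : rsmulAux T M N t (m ⊗ₜ[ℤ] (s • n)) = m ⊗ₜ[ℤ] (s • (t • n)) := by
    simp [rsmulAux, LinearMap.lTensor_tmul, smul_comm]
  rw [h1, h2]
  exact AddSubgroup.subset_closure ⟨m, s, t • n, rfl⟩

instance : SMul Tᵐᵒᵖ (BalTensor S M N) :=
  ⟨fun t => QuotientAddGroup.map _ _ (rsmulAux T M N t) (rsmulAux_le S T M N t)⟩

theorem BalTensor.rsmul_mk (t : Tᵐᵒᵖ) (x : M ⊗[ℤ] N) :
    t • (BalTensor.mk S M N x) = BalTensor.mk S M N (rsmulAux T M N t x) := rfl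

instance : Module Tᵐᵒᵖ (BalTensor S M N) where
  smul t x := t • x
  one_smul x := by
    induction x using QuotientAddGroup.induction_on with
    | H y =>
      show QuotientAddGroup.mk (rsmulAux T M N 1 y) = _
      congr 1
      induction y using TensorProduct.induction_on with
      | zero => simp
      | tmul m n => simp [rsmulAux]
      | add a b ha hb => simp only [map_add, ha, hb]
  mul_smul a b x := by
    induction x using QuotientAddGroup.induction_on with
    | H y =>
      show QuotientAddGroup.mk (rsmulAux T M N (a * b) y) =
        QuotientAddGroup.mk (rsmulAux T M N a (rsmulAux T M N b y))
      congr 1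
      induction y using TensorProduct.induction_on with
      | zero => simp
      | tmul m n => simp [rsmulAux, mul_smul]
      | add a' b' ha hb => simp only [map_add, ha, hb]
  smul_zero t := map_zero (QuotientAddGroup.map _ _ (rsmulAux T M N t) (rsmulAux_le S T M N t))
  smul_add t x y := map_add (QuotientAddGroup.map _ _ (rsmulAux T M N t) (rsmulAux_le S T M N t)) x y
  add_smul a b x := by
    induction x using QuotientAddGroup.induction_on with
    | H y =>
      show QuotientAddGroup.mk (rsmulAux T M N (a + b) y) =
        QuotientAddGroup.mk (rsmulAux T M N a y) + QuotientAddGroup.mk (rsmulAux T M N b y)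
      refine (congrArg (fun z : M ⊗[ℤ] N => (QuotientAddGroup.mk z : M ⊗[ℤ] N ⧸ balRel S M N)) ?_).trans
        (QuotientAddGroup.mk_add ..)
      induction y using TensorProduct.induction_on with
      | zero => simp
      | tmul m n => simp [rsmulAux, add_smul, TensorProduct.tmul_add]
      | add a' b' ha hb =>
        simp only [map_add, ha, hb]
        abel
  zero_smul x := by
    induction x using QuotientAddGroup.induction_on with
    | H y =>
      show QuotientAddGroup.mk (rsmulAux T M N (0 : Tᵐᵒᵖ) y) = 0
      have : rsmulAux T M N (0 : Tᵐᵒᵖ) y = 0 := by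
        induction y using TensorProduct.induction_on with
        | zero => simp
        | tmul m n => simp [rsmulAux]
        | add a' b' ha hb => simp only [map_add, ha, hb]; abel
      rw [this]
      rfl

theorem BalTensor.tmul_smul (t : Tᵐᵒᵖ) (m : M) (n : N) :
    t • (BalTensor.tmul S M N m n) = BalTensor.tmul S M N m (t • n) := by
  show QuotientAddGroup.mk (rsmulAux T M N t (m ⊗ₜ[ℤ] n)) = _
  rw [BalTensor.tmul]
  congr 1

end RightAction

section Bimodule

variable (R S T : Type*) [Ring R] [Ring S] [Ring T]
  (M : Type*) [AddCommGroup M] [Module R M] [Module Sᵐᵒᵖ M] [SMulCommClass R Sᵐᵒᵖ M]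
  (N : Type*) [AddCommGroup N] [Module S N] [Module Tᵐᵒᵖ N] [SMulCommClass S Tᵐᵒᵖ N]

instance : SMulCommClass R Tᵐᵒᵖ (BalTensor S M N) where
  smul_comm r t x := by
    induction x using QuotientAddGroup.induction_on with
    | H y =>
      show QuotientAddGroup.mk (lsmulAux R M N r (rsmulAux T M N t y)) =
        QuotientAddGroup.mk (rsmulAux T M N t (lsmulAux R M N r y))
      congr 1
      induction y using TensorProduct.induction_on with
      | zero => simp
      | tmul m n => simp [rsmulAux, lsmulAux]
      | add a b ha hb => simp only [map_add, ha, hb]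

end Bimodule

end

end Paper

open Paper MulOpposite in
/-- **part of 'Morita I'.** Let `R, S` be rings and `M` an `(R,S)`-bimodule
which is an equivalence bimodule (i.e. there is an `(S,R)`-bimodule `N` with `(R,R)`- and
`(S,S)`-bimodule isomorphisms `M ⊗[S] N ≅ R` and `N ⊗[R] M ≅ S`). Then the ring
homomorphism from `R` to the endomorphism ring of `M` as a right `S`-module, sending `r`
to the map `m ↦ r • m`, is bijective. -/
theorem equivalence_bimodule_end_iso
    (R S : Type*) [Ring R] [Ring S]
    (M : Type*) [AddCommGroup M] [Module R M] [Module Sᵐᵒᵖ M] [SMulCommClass R Sᵐᵒᵖ M]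
    (N : Type*) [AddCommGroup N] [Module S N] [Module Rᵐᵒᵖ N] [SMulCommClass S Rᵐᵒᵖ N]
    (eR : BalTensor S M N ≃+ R)
    (eR_left : ∀ (r : R) (x : BalTensor S M N), eR (r • x) = r * eR x)
    (eR_right : ∀ (r : R) (x : BalTensor S M N), eR (op r • x) = eR x * r)
    (eS : BalTensor R N M ≃+ S)
    (eS_left : ∀ (s : S) (x : BalTensor R N M), eS (s • x) = s * eS x)
    (eS_right : ∀ (s : S) (x : BalTensor R N M), eS (op s • x) = eS x * s) :
    Function.Bijective (Module.toModuleEnd Sᵐᵒᵖ (S := R) M) := by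
  -- proof

  classical
  set x₀ : BalTensor S M N := eR.symm 1 with hx₀
  have heRx₀ : eR x₀ = 1 := eR.apply_symm_apply 1
  have hY : ∀ y : BalTensor S M N, op (eR y) • x₀ = y := by
    intro y
    apply eR.injective
    rw [eR_right, heRx₀, one_mul]
  constructor
  · -- injectivity
    intro r r' h
    have hm : ∀ m : M, r • m = r' • m := by
      intro m
      have := DFunLike.congr_fun h m
      simpa using this
    have hls : ∀ y : M ⊗[ℤ] N, lsmulAux R M N r y = lsmulAux R M N r' y := by
      intro y
      induction y using TensorProduct.induction_on with
      | zero => simp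
      | tmul m n => simp [lsmulAux, hm m]
      | add a b ha hb => simp only [map_add, ha, hb]
    obtain ⟨y, hy⟩ := QuotientAddGroup.mk_surjective x₀
    have hxm : x₀ = BalTensor.mk S M N y := hy.symm
    have : eR (r • x₀) = eR (r' • x₀) := by
      rw [hxm, BalTensor.lsmul_mk, BalTensor.lsmul_mk, hls y]
    rwa [eR_left, eR_left, heRx₀, mul_one, mul_one] at this
  · -- surjectivity
    intro f
    -- the endomorphism `f ⊗ id` of `M ⊗[ℤ] N`
    set F : M ⊗[ℤ] N →+ M ⊗[ℤ] N :=
      (LinearMap.rTensor N (f.toAddMonoidHom.toIntLinearMap)).toAddMonoidHom with hF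
    have hFtmul : ∀ (m : M) (n : N), F (m ⊗ₜ[ℤ] n) = f m ⊗ₜ[ℤ] n := by
      intro m n
      simp [hF, LinearMap.rTensor_tmul]
    have hle : balRel S M N ≤ (balRel S M N).comap F := by
      rw [balRel, AddSubgroup.closure_le]
      rintro x ⟨m, s, n, rfl⟩
      simp only [SetLike.mem_coe, AddSubgroup.mem_comap, map_sub]
      rw [hFtmul, hFtmul, f.map_smul]
      exact AddSubgroup.subset_closure ⟨f m, s, n, rfl⟩
    set Φ : BalTensor S M N →+ BalTensor S M N :=
      QuotientAddGroup.map (balRel S M N) (balRel S M N) F hle with hΦ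
    have hΦmk : ∀ y : M ⊗[ℤ] N, Φ (BalTensor.mk S M N y) = BalTensor.mk S M N (F y) := by
      intro y
      rfl
    have hΦtmul : ∀ (m : M) (n : N),
        Φ (BalTensor.tmul S M N m n) = BalTensor.tmul S M N (f m) n := by
      intro m n
      rw [show BalTensor.tmul S M N m n = BalTensor.mk S M N (m ⊗ₜ[ℤ] n) from rfl, hΦmk, hFtmul]
      rfl
    have hΦcomm : ∀ (a : R) (y : BalTensor S M N), Φ (op a • y) = op a • Φ y := by
      intro a y
      induction y using QuotientAddGroup.induction_on with
      | H z =>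
        show Φ (op a • BalTensor.mk S M N z) = op a • Φ (BalTensor.mk S M N z)
        rw [BalTensor.rsmul_mk, hΦmk, hΦmk, BalTensor.rsmul_mk]
        congr 1
        induction z using TensorProduct.induction_on with
        | zero => simp
        | tmul m n =>
          rw [show rsmulAux R M N (op a) (m ⊗ₜ[ℤ] n) = m ⊗ₜ[ℤ] (op a • n) by
                simp [rsmulAux, LinearMap.lTensor_tmul], hFtmul m (op a • n), hFtmul m n,
              show rsmulAux R M N (op a) (f m ⊗ₜ[ℤ] n) = f m ⊗ₜ[ℤ] (op a • n) by
                simp [rsmulAux, LinearMap.lTensor_tmul]]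
        | add u v hu hv => simp only [map_add, hu, hv]
    set r : R := eR (Φ x₀) with hr
    have hΦx₀ : Φ x₀ = r • x₀ := by
      apply eR.injective
      rw [eR_left, heRx₀, mul_one]
    have key : ∀ y, Φ y = r • y := by
      intro y
      calc Φ y = Φ (op (eR y) • x₀) := by rw [hY]
        _ = op (eR y) • Φ x₀ := hΦcomm _ _
        _ = op (eR y) • (r • x₀) := by rw [hΦx₀]
        _ = r • (op (eR y) • x₀) := (smul_comm r (op (eR y)) x₀).symm
        _ = r • y := by rw [hY]
    have htm : ∀ (m : M) (n : N),
        BalTensor.tmul S M N (f m) n = BalTensor.tmul S M N (r • m) n := by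
      intro m n
      have h1 := key (BalTensor.tmul S M N m n)
      rw [hΦtmul, BalTensor.smul_tmul] at h1
      exact h1
    -- main computation: for every `m₂`, pairing with `eS` of tensors
    have hgen : ∀ (m₂ m : M) (n : N),
        op (eS (BalTensor.tmul R N M n m₂)) • f m
          = op (eS (BalTensor.tmul R N M n m₂)) • (r • m) := by
      intro m₂ m n
      have tadd : ∀ (n₁ n₂ : N), BalTensor.tmul R N M (n₁ + n₂) m₂ =
          BalTensor.tmul R N M n₁ m₂ + BalTensor.tmul R N M n₂ m₂ := by
        intro n₁ n₂
        show QuotientAddGroup.mk _ = _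
        rw [TensorProduct.add_tmul]
        rfl
      have tz : ∀ (c : ℤ) (n : N), BalTensor.tmul R N M (c • n) m₂
          = c • BalTensor.tmul R N M n m₂ := by
        intro c n
        show QuotientAddGroup.mk _ = _
        rw [← TensorProduct.smul_tmul']
        exact (QuotientAddGroup.mk_zsmul _ _ _)
      let f2 : M →+ N →+ M :=
        AddMonoidHom.mk' (fun m' =>
          AddMonoidHom.mk' (fun n => op (eS (BalTensor.tmul R N M n m₂)) • m')
            (by
              intro n₁ n₂
              show op (eS (BalTensor.tmul R N M (n₁ + n₂) m₂)) • m' = _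
              rw [tadd, map_add, op_add, add_smul]))
          (by intro m₁ m₂'; ext n; exact smul_add _ _ _)
      have hf2 : ∀ (c : ℤ) (m' : M) (n : N), f2 (c • m') n = f2 m' (c • n) := by
        intro c m' n
        show op (eS (BalTensor.tmul R N M n m₂)) • (c • m')
            = op (eS (BalTensor.tmul R N M (c • n) m₂)) • m'
        rw [tz, map_zsmul, smul_comm]
        congr 1
        rw [show op (c • eS (BalTensor.tmul R N M n m₂))
            = c • op (eS (BalTensor.tmul R N M n m₂)) from rfl, smul_assoc]
      set G0 : M ⊗[ℤ] N →+ M := TensorProduct.liftAddHom f2 hf2 with hG0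
      have hG0tmul : ∀ (m' : M) (n : N),
          G0 (m' ⊗ₜ[ℤ] n) = op (eS (BalTensor.tmul R N M n m₂)) • m' :=
        fun m' n => TensorProduct.liftAddHom_tmul f2 hf2 m' n
      have hker : balRel S M N ≤ G0.ker := by
        rw [balRel, AddSubgroup.closure_le]
        rintro x ⟨m', s, n, rfl⟩
        simp only [SetLike.mem_coe, AddMonoidHom.mem_ker, map_sub, hG0tmul]
        rw [sub_eq_zero]
        rw [show op (eS (BalTensor.tmul R N M n m₂)) • (op s • m')
              = (op (eS (BalTensor.tmul R N M n m₂)) * op s) • m' from (mul_smul _ _ _).symm,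
            show op (eS (BalTensor.tmul R N M n m₂)) * op s
              = op (s * eS (BalTensor.tmul R N M n m₂)) from rfl,
            ← eS_left, BalTensor.smul_tmul]
      set Gbar : BalTensor S M N →+ M := QuotientAddGroup.lift (balRel S M N) G0 hker with hGbar
      have hGtmul : ∀ (m' : M) (n : N),
          Gbar (BalTensor.tmul S M N m' n) = op (eS (BalTensor.tmul R N M n m₂)) • m' := by
        intro m' n
        show Gbar (QuotientAddGroup.mk (m' ⊗ₜ[ℤ] n)) = _
        exact hG0tmul m' n
      have := congrArg Gbar (htm m n)
      rwa [hGtmul, hGtmul] at this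
    have hall' : ∀ (w : N ⊗[ℤ] M) (m : M),
        op (eS (BalTensor.mk R N M w)) • f m = op (eS (BalTensor.mk R N M w)) • (r • m) := by
      intro w
      induction w using TensorProduct.induction_on with
      | zero =>
        intro m
        rw [show BalTensor.mk R N M (0 : N ⊗[ℤ] M) = 0 from rfl, map_zero]
        simp
      | tmul n m₂ => exact fun m => hgen m₂ m n
      | add w₁ w₂ h₁ h₂ =>
        intro m
        rw [show BalTensor.mk R N M (w₁ + w₂)
            = BalTensor.mk R N M w₁ + BalTensor.mk R N M w₂ from rfl, map_add, op_add,
          add_smul, add_smul, h₁ m, h₂ m]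
    have hfin : ∀ m : M, f m = r • m := by
      intro m
      obtain ⟨w, hw⟩ := QuotientAddGroup.mk_surjective (eS.symm 1)
      have h1 := hall' w m
      rw [show BalTensor.mk R N M w = eS.symm 1 from hw, eS.apply_symm_apply] at h1
      simpa using h1
    refine ⟨r, ?_⟩
    ext m
    exact (hfin m).symm
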